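/- Gentle measurement lemma: for a quantum state ρ and an operator A with 0 < A < I, the fidelity satisfies F(ρ, AρA/Tr(A²ρ)) ≥ √(Tr(A²ρ)). -/

import Mathlib

open Matrix Kronecker
open scoped ComplexOrder Classical

variable {n : Type*} [Fintype n] [DecidableEq n]

/-- Square root of a positive semidefinite matrix (junk value `0` otherwise). -/
noncomputable def msqrt (A : Matrix n n ℂ) : Matrix n n ℂ :=
  if h : A.PosSemidef then
    (h.1.eigenvectorUnitary : Matrix n n ℂ) * diagonal ((↑) ∘ (√·) ∘ h.1.eigenvalues) *
      (star (h.1.eigenvectorUnitary : Matrix n n ℂ))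
  else 0

/-- Trace norm `‖A‖₁ = Tr √(AᴴA)`. -/
noncomputable def traceNorm (A : Matrix n n ℂ) : ℝ :=
  (msqrt (Aᴴ * A)).trace.re

/-- Fidelity `F(ρ,σ) = ‖√ρ√σ‖₁`. -/
noncomputable def fidelity (ρ σ : Matrix n n ℂ) : ℝ :=
  traceNorm (msqrt ρ * msqrt σ)

/-- Purified distance `P(ρ,σ) = √(1 − F(ρ,σ)²)`. -/
noncomputable def purifiedDist (ρ σ : Matrix n n ℂ) : ℝ :=
  Real.sqrt (1 - (fidelity ρ σ) ^ 2)

section Aux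

open scoped MatrixOrder

/-- Square root of a PSD matrix, by the spectral formula. -/
noncomputable def Matrix.PosSemidef.sqrt {A : Matrix n n ℂ} (h : A.PosSemidef) : Matrix n n ℂ :=
  (h.1.eigenvectorUnitary : Matrix n n ℂ) * diagonal ((↑) ∘ (√·) ∘ h.1.eigenvalues) *
    (star (h.1.eigenvectorUnitary : Matrix n n ℂ))

lemma Matrix.PosSemidef.sqrt_eq_cfc' {A : Matrix n n ℂ} (h : A.PosSemidef) :
    h.sqrt = CFC.sqrt A := by
  rw [CFC.sqrt_eq_cfc, cfc_nnreal_eq_real _ A, h.1.cfc_eq]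
  simp only [IsHermitian.cfc, Unitary.conjStarAlgAut_apply, Matrix.PosSemidef.sqrt]
  congr 3
  funext x
  simp only [Function.comp_apply]
  rw [Real.coe_sqrt, Real.coe_toNNReal _ (h.eigenvalues_nonneg x)]
  rfl

lemma Matrix.PosSemidef.posSemidef_sqrt {A : Matrix n n ℂ} (h : A.PosSemidef) :
    h.sqrt.PosSemidef := by
  rw [h.sqrt_eq_cfc']; exact (CFC.sqrt_nonneg A).posSemidef

lemma Matrix.PosSemidef.sqrt_mul_self {A : Matrix n n ℂ} (h : A.PosSemidef) :
    h.sqrt * h.sqrt = A := by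
  rw [h.sqrt_eq_cfc']; exact CFC.sqrt_mul_sqrt_self A h.nonneg

lemma Matrix.PosSemidef.eq_sqrt_of_sq_eq {A : Matrix n n ℂ} (hA : A.PosSemidef) (B : Matrix n n ℂ)
    {hB : B.PosSemidef} (hAB : A ^ 2 = B) : A = hB.sqrt := by
  rw [hB.sqrt_eq_cfc']
  exact (CFC.sqrt_unique (by rw [← sq]; exact hAB) hA.nonneg).symm

open Polynomial

variable {R : Type*} [CommRing R]

lemma charpoly_conj_aux (U V M : Matrix n n R) (hUV : U * V = 1) (_hVU : V * U = 1) :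
    (U * M * V).charpoly = M.charpoly := by
  have h1 : U.map (C : R →+* R[X]) * V.map C = 1 := by
    rw [← Matrix.map_mul, hUV]; simp
  have key : charmatrix (U * M * V) = U.map C * charmatrix M * V.map C := by
    simp only [charmatrix, RingHom.mapMatrix_apply]
    rw [mul_sub, sub_mul]
    congr 1
    · conv_rhs => rw [scalar_apply, ← smul_eq_mul_diagonal, smul_mul_assoc, h1,
        smul_eq_diagonal_mul, mul_one]
      rw [scalar_apply]
    · simp [Matrix.map_mul, mul_assoc]
  have hdet : (U.map (C : R →+* R[X])).det * (V.map C).det = 1 := by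
    rw [← det_mul, h1, det_one]
  rw [Matrix.charpoly, key, det_mul, det_mul, Matrix.charpoly]
  calc (U.map (C : R →+* R[X])).det * (charmatrix M).det * (V.map C).det
      = (charmatrix M).det * ((U.map (C : R →+* R[X])).det * (V.map C).det) := by ring
    _ = (charmatrix M).det := by rw [hdet, mul_one]

lemma charpoly_diagonal (d : n → R) :
    (Matrix.diagonal d).charpoly = ∏ i, (X - C (d i)) := by
  rw [Matrix.charpoly]
  have : charmatrix (Matrix.diagonal d) = Matrix.diagonal fun i => X - C (d i) := by
    ext i j
    by_cases h : i = j
    · subst h; simp [charmatrix_apply_eq]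
    · simp [charmatrix_apply_ne _ _ _ h, Matrix.diagonal_apply_ne _ h, diagonal_apply_ne _ h]
  rw [this, det_diagonal]

lemma charpoly_mul_comm' [IsDomain R] (A B : Matrix n n R) :
    (A * B).charpoly = (B * A).charpoly := by
  set U : Matrix (n ⊕ n) (n ⊕ n) R := fromBlocks 1 A 0 1 with hU
  set V : Matrix (n ⊕ n) (n ⊕ n) R := fromBlocks 1 (-A) 0 1 with hV
  set F : Matrix (n ⊕ n) (n ⊕ n) R := fromBlocks 0 0 B (B*A) with hF
  have hconj : U * F * V = fromBlocks (A*B) 0 B 0 := by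
    simp [hU, hV, hF, fromBlocks_multiply, Matrix.mul_assoc]
  have hUV : U * V = 1 := by
    simp [hU, hV, fromBlocks_multiply, ← fromBlocks_one]
  have hVU : V * U = 1 := by
    simp [hU, hV, fromBlocks_multiply, ← fromBlocks_one]
  have h := charpoly_conj_aux U V F hUV hVU
  rw [hconj, hF] at h
  rw [charpoly_fromBlocks_zero₁₂, charpoly_fromBlocks_zero₁₂] at h
  have hzero : (0 : Matrix n n R).charpoly = X ^ (Fintype.card n) := by
    have := _root_.charpoly_diagonal (fun _ : n => (0 : R))
    simpa [Finset.prod_const] using this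
  rw [hzero, mul_comm] at h
  exact mul_left_cancel₀ (pow_ne_zero _ X_ne_zero) h

lemma hermitian_charpoly {H : Matrix n n ℂ} (hH : H.IsHermitian) :
    H.charpoly = ∏ i, (X - C ((hH.eigenvalues i : ℂ))) := by
  have hs := hH.spectral_theorem
  have hUV : (hH.eigenvectorUnitary : Matrix n n ℂ) * (star hH.eigenvectorUnitary : Matrix n n ℂ) = 1 :=
    Unitary.coe_mul_star_self _
  have hVU : (star hH.eigenvectorUnitary : Matrix n n ℂ) * (hH.eigenvectorUnitary : Matrix n n ℂ) = 1 :=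
    Unitary.coe_star_mul_self _
  calc H.charpoly
      = ((hH.eigenvectorUnitary : Matrix n n ℂ) * diagonal (RCLike.ofReal ∘ hH.eigenvalues) *
        (star hH.eigenvectorUnitary : Matrix n n ℂ)).charpoly := by rw [← Unitary.conjStarAlgAut_apply (S := ℂ), ← hs]
    _ = (diagonal (RCLike.ofReal ∘ hH.eigenvalues)).charpoly := charpoly_conj_aux _ _ _ hUV hVU
    _ = ∏ i, (X - C ((hH.eigenvalues i : ℂ))) := by rw [_root_.charpoly_diagonal]; rfl

lemma trace_sqrt' {A : Matrix n n ℂ} (hA : A.PosSemidef) :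
    hA.sqrt.trace = ∑ i, ((Real.sqrt (hA.1.eigenvalues i) : ℂ)) := by
  unfold Matrix.PosSemidef.sqrt
  rw [trace_mul_cycle, Unitary.coe_star_mul_self, Matrix.one_mul, trace_diagonal]
  rfl

lemma trace_sqrt_swap (M : Matrix n n ℂ) :
    (posSemidef_conjTranspose_mul_self M).sqrt.trace =
    (posSemidef_self_mul_conjTranspose M).sqrt.trace := by
  have hP := posSemidef_conjTranspose_mul_self M
  have hQ := posSemidef_self_mul_conjTranspose M
  have hchar : (Mᴴ * M).charpoly = (M * Mᴴ).charpoly := charpoly_mul_comm' Mᴴ M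
  rw [hermitian_charpoly hP.1, hermitian_charpoly hQ.1] at hchar
  set sP : Multiset ℂ := Finset.univ.val.map (fun i => (hP.1.eigenvalues i : ℂ)) with hsP
  set sQ : Multiset ℂ := Finset.univ.val.map (fun i => (hQ.1.eigenvalues i : ℂ)) with hsQ
  have h1 : ∏ i, (X - C ((hP.1.eigenvalues i : ℂ))) = (sP.map (fun a => X - C a)).prod := by
    rw [hsP, Multiset.map_map]; rfl
  have h2 : ∏ i, (X - C ((hQ.1.eigenvalues i : ℂ))) = (sQ.map (fun a => X - C a)).prod := by
    rw [hsQ, Multiset.map_map]; rfl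
  have hs : sP = sQ := by
    rw [← roots_multiset_prod_X_sub_C sP, ← roots_multiset_prod_X_sub_C sQ,
      ← h1, ← h2, hchar]
  set g : ℂ → ℂ := fun z => ((Real.sqrt z.re : ℝ) : ℂ) with hg
  have key : ∀ (N : Matrix n n ℂ) (hN : N.PosSemidef)
      (s : Multiset ℂ) (h : s = Finset.univ.val.map (fun i => (hN.1.eigenvalues i : ℂ))),
      hN.sqrt.trace = (s.map g).sum := by
    intro N hN s h
    rw [trace_sqrt' hN, h, Multiset.map_map]
    rfl
  rw [key _ hP sP hsP, key _ hQ sQ hsQ, hs]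

lemma psd_smul_real {N : Matrix n n ℂ} (hN : N.PosSemidef) {c : ℝ} (hc : 0 ≤ c) :
    (((c : ℂ)) • N).PosSemidef := by
  constructor
  · have := hN.1
    rw [Matrix.IsHermitian, conjTranspose_smul, this]
    congr 1
    simp
  · intro x
    exact (hN.smul (by exact_mod_cast hc : (0:ℂ) ≤ (c:ℂ))).2 x

lemma psd_trace_nonneg {P : Matrix n n ℂ} (hP : P.PosSemidef) : 0 ≤ P.trace := by
  rw [Matrix.trace]
  refine Finset.sum_nonneg fun i _ => ?_
  exact hP.diag_nonneg

lemma psd_trace_mul_nonneg {P Q : Matrix n n ℂ} (hP : P.PosSemidef) (hQ : Q.PosSemidef) :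
    0 ≤ (P * Q).trace := by
  have h1 : (hQ.sqrt * P * hQ.sqrt).PosSemidef := by
    have := hP.mul_mul_conjTranspose_same hQ.sqrt
    rwa [hQ.posSemidef_sqrt.1] at this
  have h2 : (hQ.sqrt * P * hQ.sqrt).trace = (P * Q).trace := by
    rw [trace_mul_cycle, hQ.sqrt_mul_self, trace_mul_comm]
  rw [← h2]
  exact psd_trace_nonneg h1

lemma sandwich (B C : Matrix n n ℂ) (h : B * B = C) : B * C * B = C * C := by
  rw [← h]; simp only [Matrix.mul_assoc]

lemma sandwich2 (B C D : Matrix n n ℂ) (h : B * B = C) :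
    B * (D * C * D) * B = (B * D * B) * (B * D * B) := by
  rw [← h]; simp only [Matrix.mul_assoc]

end Aux

set_option maxHeartbeats 2000000 in
/-- Gentle measurement lemma: `F(ρ, AρA/Tr(A²ρ)) ≥ √(Tr(A²ρ))`. -/
theorem gentle_measurement (ρ A : Matrix n n ℂ)
    (hρ : ρ.PosSemidef) (hρ1 : ρ.trace = 1)
    (hA : A.PosSemidef) (hAI : (1 - A).PosSemidef)
    (ht : 0 < ((A * A * ρ).trace).re) :
    Real.sqrt (((A * A * ρ).trace).re) ≤
      fidelity ρ (((((A * A * ρ).trace).re : ℂ)⁻¹) • (A * ρ * A)) := by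
  set t : ℝ := ((A * A * ρ).trace).re with htdef
  set σ : Matrix n n ℂ := (((t : ℂ))⁻¹) • (A * ρ * A) with hσdef
  -- σ is PSD
  have hAρA : (A * ρ * A).PosSemidef := by
    have := hρ.mul_mul_conjTranspose_same A
    rwa [hA.1] at this
  have htinv : ((t : ℂ))⁻¹ = (((t⁻¹ : ℝ)) : ℂ) := by push_cast; ring
  have hσ : σ.PosSemidef := by
    rw [hσdef, htinv]
    exact psd_smul_real hAρA (inv_nonneg.mpr ht.le)
  -- unfold fidelity
  set M : Matrix n n ℂ := hρ.sqrt * hσ.sqrt with hM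
  have hfid : fidelity ρ σ = ((posSemidef_conjTranspose_mul_self M).sqrt).trace.re := by
    have e1 : msqrt ρ = hρ.sqrt := dif_pos hρ
    have e2 : msqrt σ = hσ.sqrt := dif_pos hσ
    have e3 : msqrt (Mᴴ * M) = (posSemidef_conjTranspose_mul_self M).sqrt :=
      dif_pos (posSemidef_conjTranspose_mul_self M)
    rw [fidelity, traceNorm, e1, e2, ← hM, e3]
  -- compute M * Mᴴ
  have hMMH : M * Mᴴ = ((t : ℂ))⁻¹ • ((hρ.sqrt * A * hρ.sqrt) * (hρ.sqrt * A * hρ.sqrt)) := by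
    rw [hM, conjTranspose_mul, hρ.posSemidef_sqrt.1, hσ.posSemidef_sqrt.1]
    calc hρ.sqrt * hσ.sqrt * (hσ.sqrt * hρ.sqrt)
        = hρ.sqrt * (hσ.sqrt * hσ.sqrt) * hρ.sqrt := by
          simp only [Matrix.mul_assoc]
      _ = hρ.sqrt * σ * hρ.sqrt := by rw [hσ.sqrt_mul_self]
      _ = ((t : ℂ))⁻¹ • (hρ.sqrt * (A * ρ * A) * hρ.sqrt) := by
          rw [hσdef]
          simp only [Matrix.mul_smul, Matrix.smul_mul]
      _ = ((t : ℂ))⁻¹ • ((hρ.sqrt * A * hρ.sqrt) * (hρ.sqrt * A * hρ.sqrt)) := by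
          rw [sandwich2 hρ.sqrt ρ A hρ.sqrt_mul_self]
  -- the explicit square root of M * Mᴴ
  set Y : Matrix n n ℂ := ((Real.sqrt t⁻¹ : ℝ) : ℂ) • (hρ.sqrt * A * hρ.sqrt) with hY
  have hYpsd : Y.PosSemidef := by
    rw [hY]
    refine psd_smul_real ?_ (Real.sqrt_nonneg _)
    have := hA.mul_mul_conjTranspose_same hρ.sqrt
    rwa [hρ.posSemidef_sqrt.1] at this
  have hYsq : Y ^ 2 = M * Mᴴ := by
    rw [hY, hMMH, pow_two, smul_mul_smul_comm, ← Complex.ofReal_mul,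
      Real.mul_self_sqrt (inv_nonneg.mpr ht.le), htinv]
  have hYeq : Y = (posSemidef_self_mul_conjTranspose M).sqrt :=
    hYpsd.eq_sqrt_of_sq_eq _ hYsq
  -- trace of Y
  have htrY : Y.trace = ((Real.sqrt t⁻¹ : ℝ) : ℂ) * (ρ * A).trace := by
    rw [hY, trace_smul, smul_eq_mul, trace_mul_cycle, hρ.sqrt_mul_self]
  -- fidelity value
  have hfid2 : fidelity ρ σ = Real.sqrt t⁻¹ * ((ρ * A).trace).re := by
    rw [hfid, trace_sqrt_swap M, ← hYeq, htrY, Complex.re_ofReal_mul]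
  -- Tr(ρA) ≥ Tr(A²ρ)
  have hsub : (A - A * A).PosSemidef := by
    have h1 : hA.sqrt * (1 - A) * hA.sqrt = A - A * A := by
      rw [Matrix.mul_sub, Matrix.mul_one, Matrix.sub_mul, hA.sqrt_mul_self,
        sandwich hA.sqrt A hA.sqrt_mul_self]
    have := hAI.mul_mul_conjTranspose_same hA.sqrt
    rwa [hA.posSemidef_sqrt.1, h1] at this
  have hmono : t ≤ ((ρ * A).trace).re := by
    have h0 : 0 ≤ ((A - A * A) * ρ).trace := psd_trace_mul_nonneg hsub hρ
    have h1 : ((A - A * A) * ρ).trace = (A * ρ).trace - (A * A * ρ).trace := by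
      rw [Matrix.sub_mul, trace_sub]
    rw [h1] at h0
    have h2 : 0 ≤ ((A * ρ).trace - (A * A * ρ).trace).re := by
      rw [Complex.le_def] at h0
      exact h0.1
    rw [Complex.sub_re] at h2
    rw [trace_mul_comm]
    rw [htdef]
    linarith
  -- final arithmetic
  rw [hfid2, Real.sqrt_inv]
  have hst : 0 < Real.sqrt t := Real.sqrt_pos.mpr ht
  calc Real.sqrt t = (Real.sqrt t)⁻¹ * t := by
        rw [inv_mul_eq_div, Real.div_sqrt]
    _ ≤ (Real.sqrt t)⁻¹ * ((ρ * A).trace).re :=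
        mul_le_mul_of_nonneg_left hmono (inv_nonneg.mpr hst.le)
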